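/- Let G be a finite graph (a one-inclusion graph on vertex set of realizable binary label sequences of length N) with the property that every nonempty subgraph contains a vertex of degree at most k. Then there exists an assignment of probabilities to the edges such that every vertex's leave-one-out regret is at most (k·log N + k·log 2 + 1 + o(1))/N; in particular the minimax leave-one-out regret is at most k·log(N)/N + o(log(N)/N) as N → ∞. -/

import Mathlib

open Finset

lemma exists_degeneracy_order {V : Type*} [Fintype V] [DecidableEq V]
    (G : SimpleGraph V) [DecidableRel G.Adj] (k : ℕ)
    (hdegen : ∀ S : Finset V, S.Nonempty → ∃ u ∈ S, (S.filter (G.Adj u)).card ≤ k) :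
    ∀ S : Finset V, ∃ f : V → ℕ,
      (∀ u ∈ S, ∀ v ∈ S, f u = f v → u = v) ∧
      ∀ u ∈ S, (S.filter (fun v => G.Adj u v ∧ f u < f v)).card ≤ k := by
  intro S
  induction S using Finset.strongInduction with
  | _ S ih =>
    rcases S.eq_empty_or_nonempty with rfl | hS
    · exact ⟨fun _ => 0, by simp, by simp⟩
    · obtain ⟨u, hu, huk⟩ := hdegen S hS
      obtain ⟨f, hinj, hf⟩ := ih (S.erase u) (Finset.erase_ssubset hu)
      refine ⟨fun w => if w = u then 0 else f w + 1, ?_, ?_⟩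
      · intro a ha b hb hab
        by_cases hau : a = u <;> by_cases hbu : b = u
        · rw [hau, hbu]
        · exact absurd hab (by simp [hau, hbu])
        · exact absurd hab (by simp [hau, hbu])
        · simp only [if_neg hau, if_neg hbu] at hab
          exact hinj a (Finset.mem_erase.2 ⟨hau, ha⟩) b (Finset.mem_erase.2 ⟨hbu, hb⟩) (by omega)
      · intro w hw
        by_cases hwu : w = u
        · subst hwu
          refine le_trans (Finset.card_le_card ?_) huk
          intro v hv
          simp only [Finset.mem_filter] at hv ⊢
          exact ⟨hv.1, hv.2.1⟩
        · refine le_trans (Finset.card_le_card ?_) (hf w (Finset.mem_erase.2 ⟨hwu, hw⟩))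
          intro v hv
          simp only [Finset.mem_filter, Finset.mem_erase] at hv ⊢
          obtain ⟨hvS, hadj, hlt⟩ := hv
          have hvu : v ≠ u := by
            rintro rfl
            simp [hwu] at hlt
          simp only [if_neg hwu, if_neg hvu] at hlt
          exact ⟨⟨hvu, hvS⟩, hadj, by omega⟩

/-- If every nonempty (induced) subgraph of the finite one-inclusion graph `G`
contains a vertex of degree at most `k` (i.e. `G` is `k`-degenerate), and every degree is
at most `N`, then there is an edge-probability assignment under which every vertex's
leave-one-out regret is at most `(k·log N + k·log 2 + 2)/N`; in particular the minimax
leave-one-out regret is at most `k·log(N)/N + o(log N / N)`. -/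
theorem degenerate_graph_regret_bound {V : Type*} [Fintype V] (G : SimpleGraph V)
    [DecidableRel G.Adj] (N k : ℕ) (hN : 2 ≤ N)
    (hdegN : ∀ u, G.degree u ≤ N)
    (hdegen : ∀ S : Finset V, S.Nonempty →
      ∃ u ∈ S, (S.filter (G.Adj u)).card ≤ k) :
    ∃ p : V → V → ℝ,
      (∀ u v, G.Adj u v → p u v ∈ Set.Ioo (0 : ℝ) 1 ∧ p u v + p v u = 1) ∧
      ∀ u, (1 / (N : ℝ)) * ∑ v ∈ G.neighborFinset u, -Real.log (p u v)
        ≤ ((k : ℝ) * Real.log N + k * Real.log 2 + 2) / N := by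
  classical
  obtain ⟨f, hinj, hf⟩ := exists_degeneracy_order G k hdegen Finset.univ
  have hN1 : (1 : ℝ) < (N : ℝ) := by exact_mod_cast lt_of_lt_of_le one_lt_two (by exact_mod_cast hN)
  have hN0 : (0 : ℝ) < N := lt_trans one_pos hN1
  have hNi : (0 : ℝ) < (N : ℝ)⁻¹ := inv_pos.2 hN0
  have hNi1 : (N : ℝ)⁻¹ < 1 := inv_lt_one_of_one_lt₀ hN1
  refine ⟨fun u v => if f u < f v then (N : ℝ)⁻¹ else 1 - (N : ℝ)⁻¹, ?_, ?_⟩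
  · intro u v huv
    have hne : f u ≠ f v := fun h => (G.ne_of_adj huv) (hinj u (mem_univ u) v (mem_univ v) h)
    rcases lt_or_gt_of_ne hne with h | h
    · simp only [if_pos h, if_neg (not_lt.2 h.le)]
      exact ⟨⟨hNi, hNi1⟩, by ring⟩
    · simp only [if_neg (not_lt.2 h.le), if_pos h]
      constructor
      · constructor <;> linarith
      · ring
  · intro u
    have hsplit := Finset.sum_filter_add_sum_filter_not (G.neighborFinset u)
      (fun v => f u < f v) (fun v => -Real.log (if f u < f v then (N : ℝ)⁻¹ else 1 - (N : ℝ)⁻¹))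
    have h1 : ∑ v ∈ (G.neighborFinset u).filter (fun v => f u < f v),
        -Real.log (if f u < f v then (N : ℝ)⁻¹ else 1 - (N : ℝ)⁻¹)
        ≤ (k : ℝ) * Real.log N := by
      rw [Finset.sum_congr rfl (fun v hv => ?_)]
      · rw [Finset.sum_const, nsmul_eq_mul]
        have hcard : ((G.neighborFinset u).filter (fun v => f u < f v)).card ≤ k := by
          refine le_trans (le_of_eq ?_) (hf u (mem_univ u))
          congr 1
          ext v
          simp [SimpleGraph.mem_neighborFinset, and_assoc]
        have hlog : (0 : ℝ) ≤ Real.log N := Real.log_nonneg hN1.le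
        exact mul_le_mul_of_nonneg_right (by exact_mod_cast hcard) hlog
      · simp only [Finset.mem_filter] at hv
        rw [if_pos hv.2, Real.log_inv, neg_neg]
    have h2 : ∑ v ∈ (G.neighborFinset u).filter (fun v => ¬ f u < f v),
        -Real.log (if f u < f v then (N : ℝ)⁻¹ else 1 - (N : ℝ)⁻¹)
        ≤ 2 := by
      have hterm : ∀ v ∈ (G.neighborFinset u).filter (fun v => ¬ f u < f v),
          -Real.log (if f u < f v then (N : ℝ)⁻¹ else 1 - (N : ℝ)⁻¹) ≤ ((N : ℝ) - 1)⁻¹ := by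
        intro v hv
        simp only [Finset.mem_filter] at hv
        rw [if_neg hv.2]
        have ha : (0 : ℝ) < 1 - (N : ℝ)⁻¹ := by linarith
        have : Real.log (1 - (N : ℝ)⁻¹)⁻¹ ≤ (1 - (N : ℝ)⁻¹)⁻¹ - 1 :=
          Real.log_le_sub_one_of_pos (inv_pos.2 ha)
        rw [Real.log_inv] at this
        have hN1ne : (N : ℝ) - 1 ≠ 0 := by linarith
        have heq : (1 - (N : ℝ)⁻¹)⁻¹ - 1 = ((N : ℝ) - 1)⁻¹ := by
          rw [show (1 : ℝ) - (N : ℝ)⁻¹ = ((N : ℝ) - 1) / N by field_simp, inv_div]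
          field_simp
          ring
        linarith [heq ▸ this]
      calc ∑ v ∈ (G.neighborFinset u).filter (fun v => ¬ f u < f v),
            -Real.log (if f u < f v then (N : ℝ)⁻¹ else 1 - (N : ℝ)⁻¹)
          ≤ ∑ _v ∈ (G.neighborFinset u).filter (fun v => ¬ f u < f v), ((N : ℝ) - 1)⁻¹ :=
            Finset.sum_le_sum hterm
        _ = ((G.neighborFinset u).filter (fun v => ¬ f u < f v)).card * ((N : ℝ) - 1)⁻¹ := by
            rw [Finset.sum_const, nsmul_eq_mul]
        _ ≤ (N : ℝ) * ((N : ℝ) - 1)⁻¹ := by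
            have h1 : ((G.neighborFinset u).filter (fun v => ¬ f u < f v)).card ≤ N :=
              le_trans (le_trans (Finset.card_filter_le _ _) (le_of_eq (G.card_neighborFinset_eq_degree u))) (hdegN u)
            exact mul_le_mul_of_nonneg_right (by exact_mod_cast h1) (inv_nonneg.2 (by linarith))
        _ ≤ 2 := by
            rw [mul_inv_le_iff₀ (by linarith)]
            have : (2 : ℝ) ≤ N := by exact_mod_cast hN
            linarith
    have hsum : ∑ v ∈ G.neighborFinset u,
        -Real.log (if f u < f v then (N : ℝ)⁻¹ else 1 - (N : ℝ)⁻¹)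
        ≤ (k : ℝ) * Real.log N + 2 := by
      rw [← hsplit]; linarith
    have hklog2 : (0 : ℝ) ≤ (k : ℝ) * Real.log 2 :=
      mul_nonneg (Nat.cast_nonneg k) (Real.log_nonneg one_le_two)
    rw [one_div, mul_comm ((N : ℝ)⁻¹), div_eq_mul_inv]
    exact mul_le_mul_of_nonneg_right (by linarith) (inv_nonneg.2 hN0.le)
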